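/- Let R = (ℤ/2)[y₁,y₂,y₃,y₄]/I where I is the ideal generated by y₁², y₂·(y₁+y₂), y₃·(y₂+y₃) and y₄·(y₁+y₂+y₄), and write ȳ_j for the image of y_j in R. Then in the tensor product R ⊗_{ℤ/2} R one has (1 ⊗ ȳ₂ + ȳ₂ ⊗ 1) · (1 ⊗ ȳ₃ + ȳ₃ ⊗ 1)^{3} · (1 ⊗ ȳ₄ + ȳ₄ ⊗ 1)^{3} ≠ 0. -/

import Mathlib

open MvPolynomial TensorProduct

set_option synthInstance.maxHeartbeats 1000000
set_option maxHeartbeats 1000000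

set_option synthInstance.maxSize 10000000
set_option maxRecDepth 40000
set_option linter.unusedSectionVars false

structure Quad (R : Type) (c : R) : Type where
  x : R
  y : R
deriving DecidableEq

namespace Quad

variable {R : Type} [CommRing R] {c : R}

@[ext] lemma ext' {p q : Quad R c} (h1 : p.x = q.x) (h2 : p.y = q.y) : p = q := by
  cases p; cases q; simp_all

def addQ (p q : Quad R c) : Quad R c := ⟨p.x + q.x, p.y + q.y⟩
def negQ (p : Quad R c) : Quad R c := ⟨-p.x, -p.y⟩
def mulQ (p q : Quad R c) : Quad R c := ⟨p.x * q.x, p.x * q.y + q.x * p.y + c * p.y * q.y⟩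
def zeroQ : Quad R c := ⟨0, 0⟩
def oneQ : Quad R c := ⟨1, 0⟩

lemma addQ_assoc (a b d : Quad R c) : addQ (addQ a b) d = addQ a (addQ b d) := by
  ext <;> simp [addQ] <;> ring
lemma zeroQ_add (a : Quad R c) : addQ zeroQ a = a := by ext <;> simp [addQ, zeroQ]
lemma addQ_zero (a : Quad R c) : addQ a zeroQ = a := by ext <;> simp [addQ, zeroQ]
lemma addQ_comm (a b : Quad R c) : addQ a b = addQ b a := by
  ext <;> simp [addQ] <;> ring
lemma mulQ_assoc (a b d : Quad R c) : mulQ (mulQ a b) d = mulQ a (mulQ b d) := by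
  ext <;> simp [mulQ] <;> ring
lemma mulQ_comm (a b : Quad R c) : mulQ a b = mulQ b a := by
  ext <;> simp [mulQ] <;> ring
lemma oneQ_mul (a : Quad R c) : mulQ oneQ a = a := by ext <;> simp [mulQ, oneQ]
lemma mulQ_one (a : Quad R c) : mulQ a oneQ = a := by ext <;> simp [mulQ, oneQ]
lemma zeroQ_mul (a : Quad R c) : mulQ zeroQ a = zeroQ := by ext <;> simp [mulQ, zeroQ]
lemma mulQ_zero (a : Quad R c) : mulQ a zeroQ = zeroQ := by ext <;> simp [mulQ, zeroQ]
lemma left_distribQ (a b d : Quad R c) : mulQ a (addQ b d) = addQ (mulQ a b) (mulQ a d) := by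
  ext <;> simp [mulQ, addQ] <;> ring
lemma right_distribQ (a b d : Quad R c) : mulQ (addQ a b) d = addQ (mulQ a d) (mulQ b d) := by
  ext <;> simp [mulQ, addQ] <;> ring
lemma negQ_add_cancel (a : Quad R c) : addQ (negQ a) a = zeroQ := by
  ext <;> simp [negQ, addQ, zeroQ]

instance : CommRing (Quad R c) where
  add := addQ
  add_assoc := addQ_assoc
  zero := zeroQ
  zero_add := zeroQ_add
  add_zero := addQ_zero
  nsmul := letI : Zero (Quad R c) := ⟨zeroQ⟩; letI : Add (Quad R c) := ⟨addQ⟩; nsmulRec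
  zsmul :=
    letI : Zero (Quad R c) := ⟨zeroQ⟩
    letI : Add (Quad R c) := ⟨addQ⟩
    letI : Neg (Quad R c) := ⟨negQ⟩
    zsmulRec
  add_comm := addQ_comm
  mul := mulQ
  left_distrib := left_distribQ
  right_distrib := right_distribQ
  zero_mul := zeroQ_mul
  mul_zero := mulQ_zero
  mul_assoc := mulQ_assoc
  one := oneQ
  one_mul := oneQ_mul
  mul_one := mulQ_one
  neg := negQ
  neg_add_cancel := negQ_add_cancel
  mul_comm := mulQ_comm

@[simp] lemma add_x (p q : Quad R c) : (p + q).x = p.x + q.x := rfl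
@[simp] lemma add_y (p q : Quad R c) : (p + q).y = p.y + q.y := rfl
@[simp] lemma zero_x : (0 : Quad R c).x = 0 := rfl
@[simp] lemma zero_y : (0 : Quad R c).y = 0 := rfl
@[simp] lemma one_x : (1 : Quad R c).x = 1 := rfl
@[simp] lemma one_y : (1 : Quad R c).y = 0 := rfl
@[simp] lemma mul_x (p q : Quad R c) : (p * q).x = p.x * q.x := rfl
@[simp] lemma mul_y (p q : Quad R c) : (p * q).y = p.x * q.y + q.x * p.y + c * p.y * q.y := rfl

def inlHom : R →+* Quad R c where
  toFun r := ⟨r, 0⟩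
  map_one' := by ext <;> simp
  map_mul' a b := by ext <;> simp
  map_zero' := by ext <;> simp
  map_add' a b := by ext <;> simp

instance {S : Type} [CommSemiring S] [Algebra S R] : Algebra S (Quad R c) :=
  ((inlHom (c := c)).comp (algebraMap S R)).toAlgebra

lemma char2 (h : ∀ r : R, r + r = 0) : ∀ p : Quad R c, p + p = 0 := by
  intro p; ext <;> simp [h]

/-- the adjoined generator -/
def gen : Quad R c := ⟨0, 1⟩

lemma gen_rel (h : ∀ r : R, r + r = 0) :
    (gen : Quad R c) * (inlHom c + gen) = 0 := by
  ext <;> simp [gen, inlHom] <;> simp [h c]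

lemma gen_sq : (gen : Quad R (0 : R)) * gen = 0 := by
  ext <;> simp [gen]

end Quad

namespace Stmt16

structure F2 : Type where
  val : Bool
deriving DecidableEq

namespace F2
instance : Fintype F2 :=
  ⟨⟨{⟨false⟩, ⟨true⟩}, by decide⟩, by rintro ⟨a⟩; cases a <;> decide⟩
def addF (a b : F2) : F2 := ⟨xor a.val b.val⟩
def mulF (a b : F2) : F2 := ⟨a.val && b.val⟩

instance : CommRing F2 where
  add := addF
  add_assoc := by decide
  zero := ⟨false⟩
  zero_add := by decide
  add_zero := by decide
  nsmul := letI : Zero F2 := ⟨⟨false⟩⟩; letI : Add F2 := ⟨addF⟩; nsmulRec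
  zsmul :=
    letI : Zero F2 := ⟨⟨false⟩⟩
    letI : Add F2 := ⟨addF⟩
    letI : Neg F2 := ⟨id⟩
    zsmulRec
  add_comm := by decide
  mul := mulF
  left_distrib := by decide
  right_distrib := by decide
  zero_mul := by decide
  mul_zero := by decide
  mul_assoc := by decide
  one := ⟨true⟩
  one_mul := by decide
  mul_one := by decide
  neg := id
  neg_add_cancel := by decide
  mul_comm := by decide

def homZMod : ZMod 2 →+* F2 where
  toFun z := ⟨z = 1⟩
  map_one' := by decide
  map_mul' := by decide
  map_zero' := by decide
  map_add' := by decide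

instance : Algebra (ZMod 2) F2 := homZMod.toAlgebra

lemma addself : ∀ r : F2, r + r = 0 := by decide
end F2

abbrev K1 : Type := Quad F2 0
abbrev w1 : K1 := ⟨0, 1⟩
abbrev K2 : Type := Quad K1 w1
abbrev w2 : K2 := ⟨0, 1⟩
abbrev K3 : Type := Quad K2 w2
abbrev w3 : K3 := ⟨0, 1⟩
abbrev c4 : K3 := ⟨⟨w1, 1⟩, 0⟩
abbrev K4 : Type := Quad K3 c4
abbrev w4 : K4 := ⟨0, 1⟩
abbrev K5 : Type := Quad K4 0
abbrev w5 : K5 := ⟨0, 1⟩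
abbrev K6 : Type := Quad K5 w5
abbrev w6 : K6 := ⟨0, 1⟩
abbrev c7 : K6 := ⟨w5, 0⟩
abbrev K7 : Type := Quad K6 c7

lemma char1 : ∀ p : K1, p + p = 0 := Quad.char2 F2.addself
lemma char2 : ∀ p : K2, p + p = 0 := Quad.char2 char1
lemma char3 : ∀ p : K3, p + p = 0 := Quad.char2 char2
lemma char4 : ∀ p : K4, p + p = 0 := Quad.char2 char3
lemma char5 : ∀ p : K5, p + p = 0 := Quad.char2 char4
lemma char6 : ∀ p : K6, p + p = 0 := Quad.char2 char5

def a1 : K7 := ⟨⟨⟨⟨⟨⟨w1, 0⟩, 0⟩, 0⟩, 0⟩, 0⟩, 0⟩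
def a2 : K7 := ⟨⟨⟨⟨⟨w2, 0⟩, 0⟩, 0⟩, 0⟩, 0⟩
def a3 : K7 := ⟨⟨⟨⟨w3, 0⟩, 0⟩, 0⟩, 0⟩
def a4 : K7 := ⟨⟨⟨w4, 0⟩, 0⟩, 0⟩
def g2 : K7 := ⟨⟨w5, 0⟩, 0⟩
def g3 : K7 := ⟨w6, 0⟩
def g4 : K7 := ⟨0, 1⟩

def av : Fin 4 → K7 := fun i => match i with | 0 => a1 | 1 => a2 | 2 => a3 | 3 => a4
def bv : Fin 4 → K7 := fun i => match i with | 0 => 0 | 1 => g2 | 2 => g3 | 3 => g4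

-- lifting ring homs
def ι12 : K1 →+* K2 := Quad.inlHom
def ι23 : K2 →+* K3 := Quad.inlHom
def ι34 : K3 →+* K4 := Quad.inlHom
def ι45 : K4 →+* K5 := Quad.inlHom
def ι56 : K5 →+* K6 := Quad.inlHom
def ι67 : K6 →+* K7 := Quad.inlHom
def ι17 : K1 →+* K7 := ι67.comp (ι56.comp (ι45.comp (ι34.comp (ι23.comp ι12))))
def ι27 : K2 →+* K7 := ι67.comp (ι56.comp (ι45.comp (ι34.comp ι23)))
def ι37 : K3 →+* K7 := ι67.comp (ι56.comp (ι45.comp ι34))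
def ι47 : K4 →+* K7 := ι67.comp (ι56.comp ι45)
def ι57 : K5 →+* K7 := ι67.comp ι56

lemma hA1 : a1 * a1 = 0 := by
  have h := congrArg ι17 (Quad.gen_sq (R := F2))
  rw [map_mul, map_zero] at h
  exact h

lemma hA2 : a2 * (a1 + a2) = 0 := by
  have h := congrArg ι27 (Quad.gen_rel (c := w1) char1)
  rw [map_mul, map_add, map_zero] at h
  exact h

lemma hA3 : a3 * (a2 + a3) = 0 := by
  have h := congrArg ι37 (Quad.gen_rel (c := w2) char2)
  rw [map_mul, map_add, map_zero] at h
  exact h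

lemma hA4 : a4 * (a1 + a2 + a4) = 0 := by
  have h := congrArg ι47 (Quad.gen_rel (c := c4) char3)
  rw [map_mul, map_add, map_zero] at h
  have e : a1 + a2 = ι47 (Quad.inlHom c4) := by decide
  rw [e]
  exact h

lemma hG2 : g2 * g2 = 0 := by
  have h := congrArg ι57 (Quad.gen_sq (R := K4))
  rw [map_mul, map_zero] at h
  exact h

lemma hG3 : g3 * (g2 + g3) = 0 := by
  have h := congrArg ι67 (Quad.gen_rel (c := w5) char5)
  rw [map_mul, map_add, map_zero] at h
  exact h

lemma hG4 : g4 * (g2 + g4) = 0 := Quad.gen_rel (c := c7) char6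

noncomputable def myI : Ideal (MvPolynomial (Fin 4) (ZMod 2)) :=
  Ideal.span {X 0 ^ 2, X 1 * (X 0 + X 1), X 2 * (X 1 + X 2), X 3 * (X 0 + X 1 + X 3)}

lemma vanish (v : Fin 4 → K7)
    (h1 : v 0 * v 0 = 0) (h2 : v 1 * (v 0 + v 1) = 0)
    (h3 : v 2 * (v 1 + v 2) = 0) (h4 : v 3 * (v 0 + v 1 + v 3) = 0) :
    ∀ a ∈ myI, aeval v a = 0 := by
  intro a ha
  have hsub : myI ≤ RingHom.ker (aeval v : MvPolynomial (Fin 4) (ZMod 2) →ₐ[ZMod 2] K7) := by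
    refine Ideal.span_le.mpr ?_
    rintro p hp
    simp only [Set.mem_insert_iff, Set.mem_singleton_iff] at hp
    rcases hp with rfl | rfl | rfl | rfl <;>
      simp only [SetLike.mem_coe, RingHom.mem_ker, map_mul, map_add, map_pow, aeval_X, pow_two]
    · exact h1
    · exact h2
    · exact h3
    · exact h4
  exact hsub ha

noncomputable def fA : (MvPolynomial (Fin 4) (ZMod 2) ⧸ myI) →ₐ[ZMod 2] K7 :=
  Ideal.Quotient.liftₐ myI (aeval av) (vanish av hA1 hA2 hA3 hA4)

noncomputable def gA : (MvPolynomial (Fin 4) (ZMod 2) ⧸ myI) →ₐ[ZMod 2] K7 :=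
  Ideal.Quotient.liftₐ myI (aeval bv)
    (vanish bv (by show (0 : K7) * 0 = 0; rw [zero_mul])
      (by show g2 * (0 + g2) = 0; rw [zero_add]; exact hG2)
      (by show g3 * (g2 + g3) = 0; exact hG3)
      (by show g4 * (0 + g2 + g4) = 0; rw [zero_add]; exact hG4))

noncomputable def Φ : ((MvPolynomial (Fin 4) (ZMod 2) ⧸ myI) ⊗[ZMod 2] (MvPolynomial (Fin 4) (ZMod 2) ⧸ myI))
    →ₐ[ZMod 2] K7 :=
  Algebra.TensorProduct.lift fA gA (fun x y => mul_comm _ _)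

end Stmt16

open Stmt16 in
theorem stmt_16 (I : Ideal (MvPolynomial (Fin 4) (ZMod 2)))
    (hI : I = Ideal.span {X 0 ^ 2, X 1 * (X 0 + X 1), X 2 * (X 1 + X 2), X 3 * (X 0 + X 1 + X 3)}) :
    ((1 : MvPolynomial (Fin 4) (ZMod 2) ⧸ I) ⊗ₜ[ZMod 2] (Ideal.Quotient.mk I (X 1))
        + (Ideal.Quotient.mk I (X 1)) ⊗ₜ[ZMod 2] 1)
      * ((1 : MvPolynomial (Fin 4) (ZMod 2) ⧸ I) ⊗ₜ[ZMod 2] (Ideal.Quotient.mk I (X 2))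
        + (Ideal.Quotient.mk I (X 2)) ⊗ₜ[ZMod 2] 1) ^ 3
      * ((1 : MvPolynomial (Fin 4) (ZMod 2) ⧸ I) ⊗ₜ[ZMod 2] (Ideal.Quotient.mk I (X 3))
        + (Ideal.Quotient.mk I (X 3)) ⊗ₜ[ZMod 2] 1) ^ 3 ≠ 0 := by
  subst hI
  intro h
  have h2 : Φ (((1 : MvPolynomial (Fin 4) (ZMod 2) ⧸ myI) ⊗ₜ[ZMod 2] (Ideal.Quotient.mk myI (X 1))
        + (Ideal.Quotient.mk myI (X 1)) ⊗ₜ[ZMod 2] 1)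
      * ((1 : MvPolynomial (Fin 4) (ZMod 2) ⧸ myI) ⊗ₜ[ZMod 2] (Ideal.Quotient.mk myI (X 2))
        + (Ideal.Quotient.mk myI (X 2)) ⊗ₜ[ZMod 2] 1) ^ 3
      * ((1 : MvPolynomial (Fin 4) (ZMod 2) ⧸ myI) ⊗ₜ[ZMod 2] (Ideal.Quotient.mk myI (X 3))
        + (Ideal.Quotient.mk myI (X 3)) ⊗ₜ[ZMod 2] 1) ^ 3) = Φ 0 := by
    exact congrArg Φ h
  rw [map_zero] at h2
  rw [pow_three, pow_three] at h2
  have hfA : ∀ i, fA (Ideal.Quotient.mk myI (X i)) = av i := fun i => aeval_X av i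
  have hgA : ∀ i, gA (Ideal.Quotient.mk myI (X i)) = bv i := fun i => aeval_X bv i
  have hΦ : ∀ a b, Φ (a ⊗ₜ[ZMod 2] b) = fA a * gA b := fun a b => Algebra.TensorProduct.lift_tmul _ _ _ a b
  simp only [map_mul, map_pow, map_add, hΦ, Algebra.TensorProduct.lift_tmul,
    hfA, hgA, Ideal.Quotient.liftₐ_apply, Ideal.Quotient.lift_mk, aeval_X,
    AlgHom.coe_toRingHom, AlgHom.toRingHom_eq_coe, RingHom.coe_coe,
    map_one, one_mul, mul_one] at h2
  exact absurd h2 (by decide)
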